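/- For every k ∈ {1,…,n−2} there exists ε₀ ∈ (0,1) such that for every ε ∈ (0,ε₀) there exists δ₀ ∈ (0,1) such that for all δ ∈ (δ₀,1): V_k(ε,δ) > W_n(ε,δ), and V_k(ε,δ) > W_{k'}(ε,δ) for every k' ∈ {k+1,…,n−1}. That is, when the probability of repetition is sufficiently close to 1 and the mistake probability is positive but sufficiently small, the tolerant conditional cooperative strategy T_k strictly beats a single defector mutant and every single less tolerant conditional cooperator mutant. -/

import Mathlib

open Finset

/-- `ψ(j,q,ε) = (j choose q)·ε^q·(1−ε)^(j−q)`. -/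
noncomputable def psi (j q : ℕ) (ε : ℝ) : ℝ :=
  (j.choose q : ℝ) * ε ^ q * (1 - ε) ^ (j - q)

/-- One-shot expected payoff of cooperation against `n−1` error-prone cooperators. -/
noncomputable def FC (n : ℕ) (b c ε : ℝ) : ℝ :=
  (1 - ε) * ∑ q ∈ range n, psi (n - 1) q ε * (b * ((n : ℝ) - q) / n - c) +
    ε * ∑ q ∈ range n, psi (n - 1) q ε * (b * ((n : ℝ) - 1 - q) / n)

/-- One-shot expected payoff of defection against `n−1` error-prone cooperators. -/
noncomputable def FD (n : ℕ) (b ε : ℝ) : ℝ :=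
  ∑ q ∈ range n, psi (n - 1) q ε * (b * ((n : ℝ) - 1 - q) / n)

/-- Repeated-game payoff of the incumbent `T_k` strategy in a `T_k` population. -/
noncomputable def Vk (n k : ℕ) (b c ε δ : ℝ) : ℝ :=
  FC n b c ε /
    (1 - δ * ∑ q ∈ range (n - k - 1), psi (n - 1) q ε -
      δ * (1 - ε) * psi (n - 1) (n - k - 1) ε)

/-- Repeated-game payoff of a single defector (`T_n`) mutant in a `T_k` population. -/
noncomputable def Wn (n k : ℕ) (b ε δ : ℝ) : ℝ :=
  FD n b ε / (1 - δ * ∑ q ∈ range (n - k - 1), psi (n - 1) q ε)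

/-- Repeated-game payoff of a single less tolerant `T_{k'}` mutant (`k < k' ≤ n−1`)
in a `T_k` population. -/
noncomputable def Wk' (n k k' : ℕ) (b c ε δ : ℝ) : ℝ :=
  (FC n b c ε +
      δ * (∑ q ∈ Icc (n - k') (n - k - 2), psi (n - 1) q ε) * Wn n k b ε δ) /
    (1 - δ * ∑ q ∈ range (n - k'), psi (n - 1) q ε)

lemma psi_nonneg {j q : ℕ} {ε : ℝ} (h0 : 0 ≤ ε) (h1 : ε ≤ 1) : 0 ≤ psi j q ε := by
  unfold psi
  have h2 : (0:ℝ) ≤ 1 - ε := by linarith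
  positivity

lemma sum_psi (n : ℕ) (hn : 1 ≤ n) (ε : ℝ) : ∑ q ∈ range n, psi (n-1) q ε = 1 := by
  have h := add_pow ε (1-ε) (n-1)
  have hn' : n - 1 + 1 = n := by omega
  rw [hn'] at h
  have h2 : ∑ q ∈ range n, psi (n-1) q ε
      = ∑ q ∈ range n, ε ^ q * (1-ε) ^ (n-1-q) * ((n-1).choose q : ℝ) := by
    apply Finset.sum_congr rfl; intro q _; unfold psi; ring
  rw [h2, ← h]
  have : ε + (1 - ε) = 1 := by ring
  rw [this, one_pow]

lemma choose_le_two_pow' (m q : ℕ) : (m.choose q) ≤ 2 ^ m := by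
  rcases le_or_gt q m with h | h
  · calc m.choose q ≤ ∑ i ∈ range (m+1), m.choose i :=
        Finset.single_le_sum (fun i _ => Nat.zero_le _) (by simp; omega)
    _ = 2 ^ m := Nat.sum_range_choose m
  · rw [Nat.choose_eq_zero_of_lt h]; exact Nat.zero_le _

lemma FC_eq (n : ℕ) (hn : 1 ≤ n) (b c ε : ℝ) :
    FC n b c ε = FD n b ε + (1-ε)*(b/(n:ℝ) - c) := by
  have hn0 : (n:ℝ) ≠ 0 := Nat.cast_ne_zero.mpr (by omega)
  unfold FC FD
  have h1 : ∑ q ∈ range n, psi (n-1) q ε * (b * ((n : ℝ) - q) / n - c)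
      = (∑ q ∈ range n, psi (n-1) q ε * (b * ((n : ℝ) - 1 - q) / n))
        + (∑ q ∈ range n, psi (n-1) q ε) * (b/(n:ℝ) - c) := by
    rw [Finset.sum_mul, ← Finset.sum_add_distrib]
    apply Finset.sum_congr rfl
    intro q _
    field_simp
    ring
  rw [h1, sum_psi n hn]
  ring

lemma FC_lb (n : ℕ) (hn : 1 ≤ n) (b c ε : ℝ) (hb : 0 < b) (hbc : b/(n:ℝ) < c)
    (hε0 : 0 ≤ ε) (hε1 : ε ≤ 1) : b - c - (n:ℝ)*ε*b ≤ FC n b c ε := by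
  have hn0 : (0:ℝ) < (n:ℝ) := by exact_mod_cast Nat.pos_of_ne_zero (by omega)
  have hn1 : (1:ℝ) ≤ (n:ℝ) := by exact_mod_cast hn
  have hcast : ((n-1:ℕ):ℝ) = (n:ℝ) - 1 := by
    have := Nat.cast_sub hn (R := ℝ); simpa using this
  -- FD lower bound
  have hFD : (1-ε)^(n-1) * (b*((n:ℝ)-1)/n) ≤ FD n b ε := by
    have h0 : psi (n-1) 0 ε * (b * ((n:ℝ) - 1 - (0:ℕ)) / n) ≤ FD n b ε := by
      apply Finset.single_le_sum (f := fun q => psi (n-1) q ε * (b * ((n:ℝ) - 1 - q) / n))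
      · intro q hq
        have hq' : (q:ℝ) ≤ (n:ℝ) - 1 := by
          have : q ≤ n - 1 := by have := Finset.mem_range.mp hq; omega
          have := (Nat.cast_le (α := ℝ)).mpr this
          rw [hcast] at this; exact this
        have h1 : 0 ≤ psi (n-1) q ε := psi_nonneg hε0 hε1
        have h2 : 0 ≤ b * ((n:ℝ) - 1 - q) / n := by
          apply div_nonneg _ (le_of_lt hn0)
          apply mul_nonneg (le_of_lt hb); linarith
        exact mul_nonneg h1 h2
      · exact Finset.mem_range.mpr (by omega)
    have hpsi0 : psi (n-1) 0 ε = (1-ε)^(n-1) := by unfold psi; simp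
    rw [hpsi0] at h0
    simpa using h0
  have hBern : 1 - ((n:ℝ)-1)*ε ≤ (1-ε)^(n-1) := by
    have h := one_add_mul_le_pow (a := -ε) (by linarith) (n-1)
    rw [hcast] at h
    have : (1:ℝ) + (-ε) = 1 - ε := by ring
    rw [this] at h
    linarith
  have hFCeq := FC_eq n hn b c ε
  have hbn : 0 < b*((n:ℝ)-1)/n ∨ b*((n:ℝ)-1)/n = 0 := by
    rcases eq_or_lt_of_le hn1 with h | h
    · right; rw [← h]; ring
    · left; exact div_pos (mul_pos hb (by linarith)) hn0
  have key : (1 - ((n:ℝ)-1)*ε) * (b*((n:ℝ)-1)/n) ≤ (1-ε)^(n-1) * (b*((n:ℝ)-1)/n) := by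
    rcases hbn with h | h
    · exact mul_le_mul_of_nonneg_right hBern (le_of_lt h)
    · rw [h]; simp
  have h2 : (1-ε)*(b/(n:ℝ) - c) ≥ (b/(n:ℝ) - c) := by nlinarith
  have h3 : (1 - ((n:ℝ)-1)*ε) * (b*((n:ℝ)-1)/n) + (b/(n:ℝ) - c) ≥ b - c - (n:ℝ)*ε*b := by
    have hexp : (1 - ((n:ℝ)-1)*ε) * (b*((n:ℝ)-1)/n) + (b/(n:ℝ) - c)
        = b - c - (((n:ℝ)-1)^2/(n:ℝ))*ε*b := by field_simp; ring
    rw [hexp]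
    have : (((n:ℝ)-1)^2/(n:ℝ)) ≤ (n:ℝ) := by
      rw [div_le_iff₀ hn0]; nlinarith
    nlinarith [mul_nonneg hε0 (le_of_lt hb)]
  linarith

lemma psi_upper (n k q : ℕ) (ε : ℝ) (hε0 : 0 < ε) (hε2 : ε ≤ 1/2)
    (hkn : k+2 ≤ n) (hq : n - k ≤ q) :
    psi (n-1) q ε ≤ 2^(2*n) * ε * psi (n-1) (n-k-1) ε := by
  have hε1 : ε ≤ 1 := by linarith
  have h1ε : (1/2:ℝ) ≤ 1 - ε := by linarith
  have h1ε0 : (0:ℝ) ≤ 1 - ε := by linarith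
  -- lower bound on Q
  have hQlb : ε^(n-k-1) * (1/2:ℝ)^n ≤ psi (n-1) (n-k-1) ε := by
    unfold psi
    have hC : (1:ℝ) ≤ ((n-1).choose (n-k-1) : ℝ) := by
      have : 0 < (n-1).choose (n-k-1) := Nat.choose_pos (by omega)
      exact_mod_cast this
    have hsub : (n-1) - (n-k-1) = k := by omega
    rw [hsub]
    have hpow : (1/2:ℝ)^n ≤ (1-ε)^k := by
      calc (1/2:ℝ)^n ≤ (1/2:ℝ)^k := pow_le_pow_of_le_one (by norm_num) (by norm_num) (by omega)
      _ ≤ (1-ε)^k := pow_le_pow_left₀ (by norm_num) h1ε k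
    calc ε^(n-k-1) * (1/2:ℝ)^n ≤ ε^(n-k-1) * (1-ε)^k :=
          mul_le_mul_of_nonneg_left hpow (pow_nonneg (le_of_lt hε0) _)
    _ ≤ ((n-1).choose (n-k-1) : ℝ) * ε^(n-k-1) * (1-ε)^k := by
        nlinarith [pow_nonneg (le_of_lt hε0) (n-k-1), pow_nonneg h1ε0 k,
          mul_nonneg (pow_nonneg (le_of_lt hε0) (n-k-1)) (pow_nonneg h1ε0 k)]
  -- upper bound on psi q
  have hup : psi (n-1) q ε ≤ 2^n * ε^(n-k) := by
    unfold psi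
    have hC : ((n-1).choose q : ℝ) ≤ 2^n := by
      calc ((n-1).choose q : ℝ) ≤ ((2:ℕ)^(n-1) : ℝ) := by
            exact_mod_cast choose_le_two_pow' (n-1) q
      _ ≤ 2^n := by
            have : (2:ℝ)^(n-1) ≤ 2^n := pow_le_pow_right₀ (by norm_num) (by omega)
            exact_mod_cast this
    have hεq : ε^q ≤ ε^(n-k) := pow_le_pow_of_le_one (le_of_lt hε0) hε1 hq
    have hpow1 : (1-ε)^((n-1)-q) ≤ 1 := pow_le_one₀ h1ε0 (by linarith)
    calc ((n-1).choose q : ℝ) * ε^q * (1-ε)^((n-1)-q)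
        ≤ ((n-1).choose q : ℝ) * ε^q * 1 := by
          apply mul_le_mul_of_nonneg_left hpow1
          exact mul_nonneg (by positivity) (pow_nonneg (le_of_lt hε0) _)
      _ = ((n-1).choose q : ℝ) * ε^q := by ring
      _ ≤ 2^n * ε^(n-k) := by
          apply mul_le_mul hC hεq (pow_nonneg (le_of_lt hε0) _) (by positivity)
  -- combine
  have hsplit : ε^(n-k) = ε * ε^(n-k-1) := by
    rw [← pow_succ']
    congr 1
    omega
  have hQ2 : ε^(n-k-1) ≤ 2^n * psi (n-1) (n-k-1) ε := by
    have := mul_le_mul_of_nonneg_right hQlb (show (0:ℝ) ≤ 2^n by positivity)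
    have hhalf : (1/2:ℝ)^n * 2^n = 1 := by rw [← mul_pow]; norm_num
    calc ε^(n-k-1) = ε^(n-k-1) * ((1/2:ℝ)^n * 2^n) := by rw [hhalf]; ring
    _ = ε^(n-k-1) * (1/2:ℝ)^n * 2^n := by ring
    _ ≤ psi (n-1) (n-k-1) ε * 2^n := this
    _ = 2^n * psi (n-1) (n-k-1) ε := by ring
  calc psi (n-1) q ε ≤ 2^n * ε^(n-k) := hup
  _ = 2^n * ε * ε^(n-k-1) := by rw [hsplit]; ring
  _ ≤ 2^n * ε * (2^n * psi (n-1) (n-k-1) ε) := by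
      apply mul_le_mul_of_nonneg_left hQ2
      positivity
  _ = 2^(2*n) * ε * psi (n-1) (n-k-1) ε := by
      rw [two_mul, pow_add]; ring

set_option maxHeartbeats 2000000 in
/-- For every `k ∈ {1,…,n−2}` there exists `ε₀ ∈ (0,1)` such that for every
`ε ∈ (0,ε₀)` there exists `δ₀ ∈ (0,1)` such that for all `δ ∈ (δ₀,1)` the
tolerant conditional cooperative strategy `T_k` strictly beats a single defector
mutant and every single less tolerant conditional cooperator mutant `T_{k'}`,
`k' ∈ {k+1,…,n−1}`. -/
theorem Tk_evolutionarily_stable (n : ℕ) (hn : 3 ≤ n) (b c : ℝ)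
    (hb0 : 0 < b / n) (hbc : b / n < c) (hcb : c < b)
    (k : ℕ) (hk1 : 1 ≤ k) (hk2 : k ≤ n - 2) :
    ∃ ε₀ : ℝ, 0 < ε₀ ∧ ε₀ < 1 ∧
      ∀ ε : ℝ, 0 < ε → ε < ε₀ →
        ∃ δ₀ : ℝ, 0 < δ₀ ∧ δ₀ < 1 ∧
          ∀ δ : ℝ, δ₀ < δ → δ < 1 →
            Vk n k b c ε δ > Wn n k b ε δ ∧
            ∀ k' : ℕ, k + 1 ≤ k' → k' ≤ n - 1 →
              Vk n k b c ε δ > Wk' n k k' b c ε δ := by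
  have hkn : k + 2 ≤ n := by omega
  have hn0 : (0:ℝ) < (n:ℝ) := by exact_mod_cast (by omega : 0 < n)
  have hb : 0 < b := by
    have h := mul_pos hb0 hn0
    rw [div_mul_cancel₀ _ (ne_of_gt hn0)] at h
    exact h
  have hγ : 0 < c - b/(n:ℝ) := by linarith
  have hbc' : 0 < b - c := by linarith
  set K : ℝ := 1 + (n:ℝ) * 2^(2*n) with hK_def
  have hK : 0 < K := by positivity
  refine ⟨min (1/2) (min ((b-c)/(2*(n:ℝ)*b)) ((b-c)/(4*(c-b/(n:ℝ))*K))), ?_, ?_, ?_⟩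
  · apply lt_min (by norm_num)
    apply lt_min
    · positivity
    · positivity
  · exact lt_of_le_of_lt (min_le_left _ _) (by norm_num)
  intro ε hε0 hεlt
  have hεhalf : ε < 1/2 := lt_of_lt_of_le hεlt (min_le_left _ _)
  have hε1 : ε < 1 := by linarith
  have hεa : ε < (b-c)/(2*(n:ℝ)*b) :=
    lt_of_lt_of_le hεlt (le_trans (min_le_right _ _) (min_le_left _ _))
  have hεb : ε < (b-c)/(4*(c-b/(n:ℝ))*K) :=
    lt_of_lt_of_le hεlt (le_trans (min_le_right _ _) (min_le_right _ _))
  set Q := psi (n-1) (n-k-1) ε with hQ_def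
  set P := ∑ q ∈ range (n - k - 1), psi (n-1) q ε with hP_def
  set T := ∑ q ∈ Finset.Ico (n-k) n, psi (n-1) q ε with hT_def
  set A := FC n b c ε with hA_def
  set B := FD n b ε with hB_def
  have hψnn : ∀ q, 0 ≤ psi (n-1) q ε := fun q => psi_nonneg (le_of_lt hε0) (le_of_lt hε1)
  have hQpos : 0 < Q := by
    rw [hQ_def]; unfold psi
    have hC : (0:ℝ) < ((n-1).choose (n-k-1) : ℝ) := by
      exact_mod_cast Nat.choose_pos (by omega : n-k-1 ≤ n-1)
    exact mul_pos (mul_pos hC (pow_pos hε0 _)) (pow_pos (by linarith) _)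
  have hP0 : 0 ≤ P := Finset.sum_nonneg fun q _ => hψnn q
  have hT0 : 0 ≤ T := Finset.sum_nonneg fun q _ => hψnn q
  have hPQT : P + Q + T = 1 := by
    have h1 : P + (∑ q ∈ Finset.Ico (n-k-1) n, psi (n-1) q ε) = 1 := by
      rw [hP_def, Finset.sum_range_add_sum_Ico _ (show n-k-1 ≤ n by omega)]
      exact sum_psi n (by omega) ε
    have h2 : (∑ q ∈ Finset.Ico (n-k-1) n, psi (n-1) q ε) = Q + T := by
      rw [Finset.sum_eq_sum_Ico_succ_bot (show n-k-1 < n by omega)]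
      have hnk : n-k-1+1 = n-k := by omega
      rw [hnk, hQ_def, hT_def]
    linarith
  have hTle : T ≤ (n:ℝ) * 2^(2*n) * ε * Q := by
    have hb1 : ∀ q ∈ Finset.Ico (n-k) n, psi (n-1) q ε ≤ 2^(2*n)*ε*Q := by
      intro q hq
      rw [hQ_def]
      exact psi_upper n k q ε hε0 (le_of_lt hεhalf) hkn (Finset.mem_Ico.mp hq).1
    have hsum := Finset.sum_le_card_nsmul _ _ _ hb1
    have hcard : (Finset.Ico (n-k) n).card = k := by rw [Nat.card_Ico]; omega
    rw [hcard, ← hT_def, nsmul_eq_mul] at hsum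
    have hkc : (k:ℝ) ≤ (n:ℝ) := by exact_mod_cast (by omega : k ≤ n)
    have hnn : (0:ℝ) ≤ 2^(2*n)*ε*Q := by positivity
    calc T ≤ (k:ℝ) * (2^(2*n)*ε*Q) := hsum
    _ ≤ (n:ℝ) * (2^(2*n)*ε*Q) := mul_le_mul_of_nonneg_right hkc hnn
    _ = (n:ℝ) * 2^(2*n) * ε * Q := by ring
  have hAlb : (b-c)/2 ≤ A := by
    have h := FC_lb n (by omega) b c ε hb hbc (le_of_lt hε0) (le_of_lt hε1)
    rw [← hA_def] at h
    have h2 : 0 < 2*(n:ℝ)*b := by positivity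
    have h3 := (lt_div_iff₀ h2).mp hεa
    nlinarith
  have hApos : 0 < A := by linarith
  have hεQT : (c - b/(n:ℝ)) * (ε*Q + T) ≤ A*Q/2 := by
    have h1 : ε*Q + T ≤ K*ε*Q := by
      have hKexp : K*ε*Q = ε*Q + (n:ℝ)*2^(2*n)*ε*Q := by rw [hK_def]; ring
      linarith
    have hd4 : 0 < 4*(c-b/(n:ℝ))*K := by positivity
    have h2 := (lt_div_iff₀ hd4).mp hεb
    have h3 : (c - b/(n:ℝ)) * (ε*Q + T) ≤ (c - b/(n:ℝ)) * (K*ε*Q) :=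
      mul_le_mul_of_nonneg_left h1 (le_of_lt hγ)
    have hKε : (c-b/(n:ℝ))*K*ε ≤ (b-c)/4 := by linarith
    have h4 : (c - b/(n:ℝ)) * (K*ε*Q) ≤ (b-c)/4 * Q := by
      calc (c - b/(n:ℝ)) * (K*ε*Q) = ((c-b/(n:ℝ))*K*ε)*Q := by ring
      _ ≤ (b-c)/4 * Q := mul_le_mul_of_nonneg_right hKε (le_of_lt hQpos)
    have h5 : (b-c)/4 * Q ≤ A*Q/2 := by
      have := mul_le_mul_of_nonneg_right (show (b-c)/4 ≤ A/2 by linarith) (le_of_lt hQpos)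
      linarith
    linarith
  refine ⟨max (1/2) (1 - A*Q/(8*(c-b/(n:ℝ)))), ?_, ?_, ?_⟩
  · exact lt_of_lt_of_le (by norm_num) (le_max_left _ _)
  · apply max_lt (by norm_num)
    have h8γ : 0 < 8*(c-b/(n:ℝ)) := by linarith
    have : 0 < A*Q/(8*(c-b/(n:ℝ))) := div_pos (mul_pos hApos hQpos) h8γ
    linarith
  intro δ hδlt hδ1
  have hδhalf : 1/2 < δ := lt_of_le_of_lt (le_max_left _ _) hδlt
  have hδpos : 0 < δ := by linarith
  have hδ2 : (c-b/(n:ℝ)) * (1-δ) < A*Q/8 := by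
    have h := lt_of_le_of_lt (le_max_right _ _) hδlt
    have h1δ : 1 - δ < A*Q/(8*(c-b/(n:ℝ))) := by linarith
    have h8γ : 0 < 8*(c-b/(n:ℝ)) := by linarith
    have h1δ' := (lt_div_iff₀ h8γ).mp h1δ
    linarith
  set d := 1 - δ*P - δ*(1-ε)*Q with hd_def
  set e := 1 - δ*P with he_def
  have hde : e = d + δ*(1-ε)*Q := by rw [hd_def]; ring
  have hd_eq : d = (1-δ) + δ*(ε*Q + T) := by
    have hP1 : P = 1 - Q - T := by linarith
    rw [hd_def, he_def, hP1]; ring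
  have hdpos : 0 < d := by
    rw [hd_eq]
    have h1 : 0 ≤ δ*(ε*Q+T) :=
      mul_nonneg (le_of_lt hδpos)
        (add_nonneg (mul_nonneg (le_of_lt hε0) (le_of_lt hQpos)) hT0)
    linarith
  have hepos : 0 < e := by
    rw [hde]
    have := mul_pos hδpos (mul_pos (show (0:ℝ) < 1-ε by linarith) hQpos)
    linarith
  have hkey : (c-b/(n:ℝ))*d < A*δ*Q := by
    rw [hd_eq]
    have h1 : δ*((c-b/(n:ℝ))*(ε*Q+T)) ≤ δ*(A*Q/2) :=
      mul_le_mul_of_nonneg_left hεQT (le_of_lt hδpos)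
    have hAQ : 0 < A*Q := mul_pos hApos hQpos
    have h6 : 0 ≤ (δ - 1/4) * (A*Q) := mul_nonneg (by linarith) (le_of_lt hAQ)
    linarith
  have hBd : B*d < A*e := by
    have hFCFD := FC_eq n (by omega) b c ε
    rw [← hA_def, ← hB_def] at hFCFD
    have hBA : B = A + (1-ε)*(c - b/(n:ℝ)) := by linarith [hFCFD]
    have h1ε : (0:ℝ) < 1-ε := by linarith
    have hmul := mul_lt_mul_of_pos_left hkey h1ε
    rw [hBA, hde]
    linarith
  have eV : Vk n k b c ε δ = A/d := by
    rw [hA_def, hd_def, he_def, hP_def, hQ_def]; rfl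
  have eWn : Wn n k b ε δ = B/e := by
    rw [hB_def, he_def, hP_def]; rfl
  constructor
  · show Wn n k b ε δ < Vk n k b c ε δ
    rw [eV, eWn]
    exact (div_lt_div_iff₀ hepos hdpos).mpr hBd
  · intro k' hk'1 hk'2
    set P' := ∑ q ∈ range (n - k'), psi (n-1) q ε with hP'_def
    set R' := ∑ q ∈ Finset.Icc (n-k') (n-k-2), psi (n-1) q ε with hR'_def
    have hR'0 : 0 ≤ R' := Finset.sum_nonneg fun q _ => hψnn q
    have hPP' : P = P' + R' := by
      have hIcc : Finset.Icc (n-k') (n-k-2) = Finset.Ico (n-k') (n-k-1) := by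
        rw [← Finset.Ico_add_one_right_eq_Icc]
        congr 1
        omega
      rw [hP_def, hP'_def, hR'_def, hIcc]
      exact (Finset.sum_range_add_sum_Ico _ (show n-k' ≤ n-k-1 by omega)).symm
    set e' := 1 - δ*P' with he'_def
    have he'e : e' = e + δ*R' := by rw [he'_def, he_def, hPP']; ring
    have he'pos : 0 < e' := by
      rw [he'e]
      have := mul_nonneg (le_of_lt hδpos) hR'0
      linarith
    have eWk : Wk' n k k' b c ε δ = (A + δ*R'*(B/e))/e' := by
      rw [hA_def, hB_def, he_def, he'_def, hP_def, hP'_def, hR'_def]; rfl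
    show Wk' n k k' b c ε δ < Vk n k b c ε δ
    rw [eWk, eV, div_lt_div_iff₀ he'pos hdpos]
    have h1 : B*d/e ≤ A := by
      rw [div_le_iff₀ hepos]; linarith
    have h2 : δ*R'*(B*d/e) ≤ δ*R'*A :=
      mul_le_mul_of_nonneg_left h1 (mul_nonneg (le_of_lt hδpos) hR'0)
    have h3 : A*d < A*e := by
      rw [hde]
      have := mul_pos hApos (mul_pos hδpos (mul_pos (show (0:ℝ) < 1-ε by linarith) hQpos))
      linarith
    have expand : (A + δ*R'*(B/e))*d = A*d + δ*R'*(B*d/e) := by ring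
    have expand2 : A*e' = A*e + δ*R'*A := by rw [he'e]; ring
    rw [expand, expand2]
    exact lt_of_lt_of_le (add_lt_add_left h3 _) (add_le_add_right h2 _)
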